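/- Iterated GHZ commutator identity: under the hypotheses of the single-commutator identity, with pairwise commuting unitaries Z_1, ..., Z_m each satisfying Z_i|0⟩ = |0⟩ and Z_i D = -D Z_i, one has ⟨ψ| D O |ψ⟩ = 2^{-m} ⟨0| D [[...[O(t), Z_1], ...], Z_m] |0⟩. -/

import Mathlib

private lemma ghz_aux {V : Type*} [NormedAddCommGroup V]
    [InnerProductSpace ℂ V] [FiniteDimensional ℂ V]
    (D : Module.End ℂ V) (ψ₀ : V) :
    ∀ (l : List (Module.End ℂ V)),
      (∀ Z ∈ l, LinearMap.adjoint Z * Z = 1 ∧ Z ψ₀ = ψ₀ ∧ Z * D = -(D * Z)) →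
      ∀ A : Module.End ℂ V,
      (inner ℂ ψ₀ (D (A ψ₀)) : ℂ) =
        (1 / 2 ^ l.length) *
          (inner ℂ ψ₀ (D ((l.foldl (fun A B => A * B - B * A) A) ψ₀)) : ℂ) := by
  intro l
  induction l with
  | nil => intro _ A; simp
  | cons Z rest ih =>
    intro h A
    obtain ⟨hZu, hZψ, hZD⟩ := h Z (List.mem_cons_self)
    have hadj : LinearMap.adjoint Z ψ₀ = ψ₀ := by
      conv_lhs => rw [← hZψ]
      have := congrArg (fun f : Module.End ℂ V => f ψ₀) hZu
      simpa using this
    have hDZ : D * Z = -(Z * D) := by rw [hZD, neg_neg]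
    have key : (inner ℂ ψ₀ (D ((A * Z - Z * A) ψ₀)) : ℂ)
        = 2 * inner ℂ ψ₀ (D (A ψ₀)) := by
      have h1 : (A * Z - Z * A) ψ₀ = A ψ₀ - Z (A ψ₀) := by
        simp [LinearMap.sub_apply, Module.End.mul_apply, hZψ]
      have h2 : D (Z (A ψ₀)) = -(Z (D (A ψ₀))) := by
        have := congrArg (fun f : Module.End ℂ V => f (A ψ₀)) hDZ
        simpa [Module.End.mul_apply] using this
      have h3 : (inner ℂ ψ₀ (Z (D (A ψ₀))) : ℂ) = inner ℂ ψ₀ (D (A ψ₀)) := by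
        rw [← LinearMap.adjoint_inner_left, hadj]
      rw [h1, map_sub, h2, inner_sub_right, inner_neg_right, h3]
      ring
    have hrest := ih (fun W hW => h W (List.mem_cons_of_mem _ hW)) (A * Z - Z * A)
    rw [List.foldl_cons, List.length_cons]
    calc (inner ℂ ψ₀ (D (A ψ₀)) : ℂ)
        = (1 / 2 : ℂ) * (2 * inner ℂ ψ₀ (D (A ψ₀))) := by ring
      _ = (1 / 2 : ℂ) * inner ℂ ψ₀ (D ((A * Z - Z * A) ψ₀)) := by rw [key]
      _ = (1 / 2 : ℂ) * ((1 / 2 ^ rest.length) *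
            inner ℂ ψ₀ (D ((rest.foldl (fun A B => A * B - B * A) (A * Z - Z * A)) ψ₀))) := by
          rw [hrest]
      _ = _ := by rw [pow_succ]; ring

/-- Iterated GHZ commutator identity: with `D` unitary, `U` unitary commuting with `D`,
and pairwise commuting unitaries `Z₁, …, Zₘ`, each fixing `ψ₀` and anticommuting with
`D`, one has `⟨ψ| D O |ψ⟩ = 2^{-m} ⟨ψ₀| D [[…[O(t), Z₁], …], Zₘ] |ψ₀⟩` where
`O(t) = U† O U` and `ψ = U ψ₀`. -/
theorem ghz_iterated_commutator_identity {V : Type*} [NormedAddCommGroup V]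
    [InnerProductSpace ℂ V] [FiniteDimensional ℂ V]
    (D U O : Module.End ℂ V) (ψ₀ : V) (m : ℕ) (Z : Fin m → Module.End ℂ V)
    (hD : LinearMap.adjoint D * D = 1 ∧ D * LinearMap.adjoint D = 1)
    (hU : LinearMap.adjoint U * U = 1 ∧ U * LinearMap.adjoint U = 1)
    (hZunit : ∀ i, LinearMap.adjoint (Z i) * Z i = 1 ∧ Z i * LinearMap.adjoint (Z i) = 1)
    (hZcomm : ∀ i j, Z i * Z j = Z j * Z i)
    (hUD : U * D = D * U)
    (hZ0 : ∀ i, Z i ψ₀ = ψ₀)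
    (hZD : ∀ i, Z i * D = -(D * Z i)) :
    (inner ℂ (U ψ₀) (D (O (U ψ₀))) : ℂ) =
      (1 / 2 ^ m) * (inner ℂ ψ₀
        (D (((List.ofFn Z).foldl (fun A B => A * B - B * A)
          (LinearMap.adjoint U * O * U)) ψ₀)) : ℂ) := by
  have hUdD : LinearMap.adjoint U * D = D * LinearMap.adjoint U := by
    calc LinearMap.adjoint U * D
        = LinearMap.adjoint U * D * (U * LinearMap.adjoint U) := by rw [hU.2, mul_one]
      _ = LinearMap.adjoint U * (D * U) * LinearMap.adjoint U := by simp [mul_assoc]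
      _ = LinearMap.adjoint U * (U * D) * LinearMap.adjoint U := by rw [hUD]
      _ = (LinearMap.adjoint U * U) * (D * LinearMap.adjoint U) := by simp [mul_assoc]
      _ = D * LinearMap.adjoint U := by rw [hU.1, one_mul]
  have hstart : (inner ℂ (U ψ₀) (D (O (U ψ₀))) : ℂ)
      = inner ℂ ψ₀ (D ((LinearMap.adjoint U * O * U) ψ₀)) := by
    calc (inner ℂ (U ψ₀) (D (O (U ψ₀))) : ℂ)
        = inner ℂ ψ₀ (LinearMap.adjoint U (D (O (U ψ₀)))) :=
          (LinearMap.adjoint_inner_right U _ _).symm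
      _ = inner ℂ ψ₀ ((LinearMap.adjoint U * D * O * U) ψ₀) := by
          simp [Module.End.mul_apply]
      _ = inner ℂ ψ₀ ((D * (LinearMap.adjoint U * O * U)) ψ₀) := by
          have : LinearMap.adjoint U * D * O * U = D * (LinearMap.adjoint U * O * U) := by
            rw [hUdD]; simp [mul_assoc]
          rw [this]
      _ = inner ℂ ψ₀ (D ((LinearMap.adjoint U * O * U) ψ₀)) := by
          rw [Module.End.mul_apply]
  rw [hstart]
  have := ghz_aux D ψ₀ (List.ofFn Z) (by
    intro W hW
    obtain ⟨i, rfl⟩ := (List.mem_ofFn).mp hW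
    exact ⟨(hZunit i).1, hZ0 i, hZD i⟩) (LinearMap.adjoint U * O * U)
  simpa using this
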